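/- For all integers m ≥ 1 and n ≥ 1, define R(m,n) = ∑_{i=1}^{n} ( C(m+i-2, i-1)·C(m+n-i-1, n-i) + ∑_{k=1}^{i} C(m+k-2, k-1)·C(m+n-k-1, n-k+1) ) − m·C(2m+n-2, n-1). Then R(m,n) = 0. -/

import Mathlib

open Finset

lemma choose_congr {x y k l : ℕ} (h1 : x = y) (h2 : k = l) :
    Nat.choose x k = Nat.choose y l := by rw [h1, h2]

lemma hockey' (a r : ℕ) : ∑ j ∈ range (r+1), Nat.choose (a+j) j = Nat.choose (a+r+1) r := by
  induction r with
  | zero => simp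
  | succ r ih =>
    rw [Finset.sum_range_succ, ih]
    have e : a + (r+1) = a + r + 1 := by omega
    rw [e]
    exact (Nat.choose_succ_succ' (a+r+1) r).symm

lemma pas (b s : ℕ) : Nat.choose (b+1+(s+1)) (s+1)
    = Nat.choose (b+(s+1)) (s+1) + Nat.choose (b+1+s) s := by
  have h := Nat.choose_succ_succ' (b+s+1) s
  have e1 : b+1+(s+1) = b+s+1+1 := by omega
  have e2 : b+(s+1) = b+s+1 := by omega
  have e3 : b+1+s = b+s+1 := by omega
  rw [e1, e2, e3, h, Nat.add_comm]

lemma pv (b : ℕ) : ∀ a r : ℕ,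
    ∑ j ∈ range (r+1), Nat.choose (a+j) j * Nat.choose (b+(r-j)) (r-j)
      = Nat.choose (a+b+r+1) r := by
  induction b with
  | zero =>
    intro a r
    have e : ∀ j ∈ range (r+1), Nat.choose (a+j) j * Nat.choose (0+(r-j)) (r-j)
        = Nat.choose (a+j) j := by
      intro j hj
      rw [Nat.zero_add, Nat.choose_self, Nat.mul_one]
    rw [Finset.sum_congr rfl e, hockey' a r]
    exact choose_congr (by omega) rfl
  | succ b ih =>
    intro a r
    induction r with
    | zero => simp
    | succ r ihr =>
      have key : ∀ j ∈ range (r+1),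
          Nat.choose (a+j) j * Nat.choose (b+1+(r+1-j)) (r+1-j)
          = Nat.choose (a+j) j * Nat.choose (b+(r+1-j)) (r+1-j)
            + Nat.choose (a+j) j * Nat.choose (b+1+(r-j)) (r-j) := by
        intro j hj
        rw [Finset.mem_range] at hj
        have h1 : r + 1 - j = (r - j) + 1 := by omega
        rw [h1, pas b (r-j), Nat.mul_add]
      rw [Finset.sum_range_succ, Finset.sum_congr rfl key, Finset.sum_add_distrib, ihr]
      have last_eq : Nat.choose (a+(r+1)) (r+1) * Nat.choose (b+1+(r+1-(r+1))) (r+1-(r+1))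
          = Nat.choose (a+(r+1)) (r+1) * Nat.choose (b+(r+1-(r+1))) (r+1-(r+1)) := by
        simp
      rw [last_eq, add_right_comm, ← Finset.sum_range_succ
        (fun j => Nat.choose (a+j) j * Nat.choose (b+(r+1-j)) (r+1-j)), ih a (r+1)]
      have e1 : a+(b+1)+r+1 = a+b+(r+1)+1 := by omega
      have e2 : a+(b+1)+(r+1)+1 = a+b+(r+1)+1+1 := by omega
      rw [e1, e2, Nat.choose_succ_succ' (a+b+(r+1)+1) r, Nat.add_comm]

lemma swap_sum (f : ℕ → ℕ) (n : ℕ) :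
    ∑ j ∈ range n, ∑ l ∈ range (j+1), f l = ∑ l ∈ range n, (n - l) * f l := by
  induction n with
  | zero => simp
  | succ n ih =>
    rw [Finset.sum_range_succ, ih, Finset.sum_range_succ (fun l => (n+1-l)*f l),
      Finset.sum_range_succ f n]
    have e : ∑ l ∈ range n, (n+1-l) * f l = ∑ l ∈ range n, ((n-l) * f l + f l) := by
      refine Finset.sum_congr rfl fun l hl => ?_
      rw [Finset.mem_range] at hl
      have h : n + 1 - l = (n - l) + 1 := by omega
      rw [h, Nat.add_mul, Nat.one_mul]
    rw [e, Finset.sum_add_distrib]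
    have h : n + 1 - n = 1 := by omega
    rw [h, Nat.one_mul]
    ring

lemma main_nat (a r : ℕ) :
    ∑ j ∈ range (r+1), (Nat.choose (a+j) j * Nat.choose (a+(r-j)) (r-j)
      + ∑ l ∈ range (j+1), Nat.choose (a+l) l * Nat.choose (a+(r-l)) (r+1-l))
    = (a+1) * Nat.choose (2*a+r+1) r := by
  have hpv : ∑ j ∈ range (r+1), Nat.choose (a+j) j * Nat.choose (a+(r-j)) (r-j)
      = Nat.choose (2*a+r+1) r := by
    rw [pv a a r]; exact choose_congr (by omega) rfl
  rw [Finset.sum_add_distrib, hpv, swap_sum]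
  have h3 : ∑ l ∈ range (r+1), (r+1-l) * (Nat.choose (a+l) l * Nat.choose (a+(r-l)) (r+1-l))
      = a * Nat.choose (2*a+r+1) r := by
    rw [← hpv, Finset.mul_sum]
    refine Finset.sum_congr rfl fun l hl => ?_
    rw [Finset.mem_range] at hl
    have hk : r + 1 - l = (r - l) + 1 := by omega
    have key : Nat.choose (a+(r-l)) ((r-l)+1) * ((r-l)+1)
        = Nat.choose (a+(r-l)) (r-l) * ((a+(r-l)) - (r-l)) :=
      Nat.choose_succ_right_eq _ _
    have hsub : (a+(r-l)) - (r-l) = a := by omega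
    rw [hsub] at key
    calc (r+1-l) * (Nat.choose (a+l) l * Nat.choose (a+(r-l)) (r+1-l))
        = Nat.choose (a+l) l * (Nat.choose (a+(r-l)) ((r-l)+1) * ((r-l)+1)) := by
          rw [hk]; ring
      _ = Nat.choose (a+l) l * (Nat.choose (a+(r-l)) (r-l) * a) := by rw [key]
      _ = a * (Nat.choose (a+l) l * Nat.choose (a+(r-l)) (r-l)) := by ring
  rw [h3]
  ring

lemma hIcc (g : ℕ → ℕ) (r : ℕ) :
    ∑ i ∈ Finset.Icc 1 (r+1), g i = ∑ j ∈ range (r+1), g (j+1) := by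
  induction r with
  | zero => simp
  | succ r ih =>
    rw [Finset.sum_Icc_succ_top (by omega), ih]
    exact (Finset.sum_range_succ (fun j => g (j+1)) (r+1)).symm

/-- For `m, n ≥ 1`,
`R(m,n) = ∑_{i=1}^{n} ( C(m+i-2,i-1)·C(m+n-i-1,n-i)
            + ∑_{k=1}^{i} C(m+k-2,k-1)·C(m+n-k-1,n-k+1) ) − m·C(2m+n-2,n-1) = 0`. -/
theorem stmt_1 (m n : ℕ) (hm : 1 ≤ m) (hn : 1 ≤ n) :
    (∑ i ∈ Finset.Icc 1 n,
        ((Nat.choose (m + i - 2) (i - 1) * Nat.choose (m + n - i - 1) (n - i) : ℤ)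
          + ∑ k ∈ Finset.Icc 1 i,
              (Nat.choose (m + k - 2) (k - 1) * Nat.choose (m + n - k - 1) (n - k + 1) : ℤ)))
      - (m : ℤ) * Nat.choose (2 * m + n - 2) (n - 1) = 0 := by
  rw [sub_eq_zero]
  obtain ⟨a, rfl⟩ : ∃ a, m = a + 1 := ⟨m - 1, by omega⟩
  obtain ⟨r, rfl⟩ : ∃ r, n = r + 1 := ⟨n - 1, by omega⟩
  norm_cast
  rw [hIcc]
  have step : ∀ j ∈ range (r+1),
      (Nat.choose (a+1 + (j+1) - 2) ((j+1) - 1) * Nat.choose (a+1 + (r+1) - (j+1) - 1) ((r+1) - (j+1))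
        + ∑ k ∈ Finset.Icc 1 (j+1),
            Nat.choose (a+1 + k - 2) (k - 1) * Nat.choose (a+1 + (r+1) - k - 1) ((r+1) - k + 1))
      = (Nat.choose (a+j) j * Nat.choose (a+(r-j)) (r-j)
        + ∑ l ∈ range (j+1), Nat.choose (a+l) l * Nat.choose (a+(r-l)) (r+1-l)) := by
    intro j hj
    rw [Finset.mem_range] at hj
    congr 1
    · rw [choose_congr (show a+1+(j+1)-2 = a+j by omega) (show (j+1)-1 = j by omega),
        choose_congr (show a+1+(r+1)-(j+1)-1 = a+(r-j) by omega) (show (r+1)-(j+1) = r-j by omega)]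
    · rw [hIcc]
      refine Finset.sum_congr rfl fun l hl => ?_
      rw [Finset.mem_range] at hl
      rw [choose_congr (show a+1+(l+1)-2 = a+l by omega) (show (l+1)-1 = l by omega),
        choose_congr (show a+1+(r+1)-(l+1)-1 = a+(r-l) by omega) (show (r+1)-(l+1)+1 = r+1-l by omega)]
  rw [Finset.sum_congr rfl step, main_nat a r]
  rw [choose_congr (show 2*(a+1)+(r+1)-2 = 2*a+r+1 by omega) (show (r+1)-1 = r by omega)]
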